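/- Let q₀ ∈ L²(0,π), α ∈ ℝ, k ≥ 1, and suppose μ ∈ ℝ is the k-th eigenvalue of L[q₀] (i.e., L[q₀] admits an eigenfunction with eigenvalue μ, boundary parameter α, and exactly k−1 zeros in (0,π)). Then for every λ ≤ μ, the nonlinear problem (NP_{−1}) (with potential q₀, spectral parameter λ and boundary parameter α) has no nonzero solution having at least k−1 zeros in the open interval (0,π). -/

import Mathlib

open MeasureTheory Set Real

noncomputable section

/-- Lebesgue measure restricted to the open interval (0, π). -/
def μI : Measure ℝ := volume.restrict (Set.Ioo 0 Real.pi)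

/-- `q` belongs to `L²(0,π)`. -/
def MemL2 (q : ℝ → ℝ) : Prop := MemLp q 2 μI

/-- The `L²(0,π)` norm. -/
def l2norm (q : ℝ → ℝ) : ℝ := (eLpNorm q 2 μI).toReal

/-- `u` is `C¹` on `[0,π]` with derivative `u'`, and `u'` is absolutely continuous
with a.e. (integrable) derivative `u''`, expressed via the fundamental theorem of
calculus: `u' x = u' 0 + ∫_0^x u''`. -/
def IsC2AC (u u' u'' : ℝ → ℝ) : Prop :=
  (∀ x ∈ Set.Icc (0:ℝ) Real.pi, HasDerivWithinAt u (u' x) (Set.Icc 0 Real.pi) x) ∧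
  ContinuousOn u' (Set.Icc 0 Real.pi) ∧
  IntervalIntegrable u'' MeasureTheory.volume 0 Real.pi ∧
  (∀ x ∈ Set.Icc (0:ℝ) Real.pi, u' x = u' 0 + ∫ t in (0:ℝ)..x, u'' t)

/-- Separated boundary conditions with boundary parameter `α`. -/
def BC (α : ℝ) (u u' : ℝ → ℝ) : Prop :=
  u 0 * Real.cos α + u' 0 * Real.sin α = 0 ∧
  u Real.pi * Real.cos α + u' Real.pi * Real.sin α = 0

/-- `u` is not identically zero on `[0,π]`. -/
def Nonzero (u : ℝ → ℝ) : Prop := ∃ x ∈ Set.Icc (0:ℝ) Real.pi, u x ≠ 0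

/-- The set of zeros of `u` in the open interval `(0,π)`. -/
def ZeroSet (u : ℝ → ℝ) : Set ℝ := {x ∈ Set.Ioo (0:ℝ) Real.pi | u x = 0}

/-- `u` (with derivative `u'` and a.e. second derivative `u''`) is an eigenfunction of
the Sturm–Liouville operator `L[q]u = -u'' + q u` with eigenvalue `lam` and boundary
parameter `α`. -/
def IsEigenfun (q : ℝ → ℝ) (α lam : ℝ) (u u' u'' : ℝ → ℝ) : Prop :=
  IsC2AC u u' u'' ∧ MemLp u'' 2 μI ∧
  (∀ᵐ x ∂μI, -u'' x + q x * u x = lam * u x) ∧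
  Nonzero u ∧ BC α u u'

/-- `lam` is the `k`-th eigenvalue of `L[q]` (boundary parameter `α`): there is an
eigenfunction with eigenvalue `lam` having exactly `k-1` zeros in `(0,π)`. -/
def HasEigenK (q : ℝ → ℝ) (α lam : ℝ) (k : ℕ) : Prop :=
  ∃ u u' u'', IsEigenfun q α lam u u' u'' ∧
    (ZeroSet u).Finite ∧ (ZeroSet u).ncard = k - 1

/-- The admissible set `A_k(lam)` of potentials `q ∈ L²(0,π)` for which `lam` is the
`k`-th eigenvalue of `L[q]`. -/
def Adm (α lam : ℝ) (k : ℕ) : Set (ℝ → ℝ) := {q | MemL2 q ∧ HasEigenK q α lam k}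

/-- `u` is a solution of the nonlinear problem `(NP_δ)`:
`-u'' + q₀ u = lam u + δ u³` a.e. in `(0,π)` with separated boundary conditions. -/
def IsNPSol (q₀ : ℝ → ℝ) (α lam δ : ℝ) (u u' u'' : ℝ → ℝ) : Prop :=
  IsC2AC u u' u'' ∧
  (∀ᵐ x ∂μI, -u'' x + q₀ x * u x = lam * u x + δ * (u x) ^ 3) ∧
  BC α u u'


section Helpers

variable {u u' u'' : ℝ → ℝ}

lemma IsC2AC.contOn (h : IsC2AC u u' u'') : ContinuousOn u (Set.Icc 0 Real.pi) :=
  fun x hx => (h.1 x hx).continuousWithinAt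

lemma IsC2AC.derivAt (h : IsC2AC u u' u'') {x : ℝ} (hx : x ∈ Set.Ioo 0 Real.pi) :
    HasDerivAt u (u' x) x :=
  (h.1 x (Set.Ioo_subset_Icc_self hx)).hasDerivAt (Icc_mem_nhds hx.1 hx.2)

lemma IsC2AC.ii_u' (h : IsC2AC u u' u'') {a b : ℝ} (ha : 0 ≤ a) (hb : b ≤ Real.pi)
    (hab : a ≤ b) : IntervalIntegrable u' volume a b :=
  (h.2.1.mono (by rw [Set.uIcc_of_le hab]; exact Set.Icc_subset_Icc ha hb)).intervalIntegrable

lemma IsC2AC.ii_u'' (h : IsC2AC u u' u'') {a b : ℝ} (ha : 0 ≤ a) (hb : b ≤ Real.pi)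
    (hab : a ≤ b) : IntervalIntegrable u'' volume a b := by
  apply h.2.2.1.mono_set
  rw [Set.uIcc_of_le hab, Set.uIcc_of_le Real.pi_nonneg]
  exact Set.Icc_subset_Icc ha hb

lemma IsC2AC.ftc1 (h : IsC2AC u u' u'') {a b : ℝ} (ha : 0 ≤ a) (hb : b ≤ Real.pi)
    (hab : a ≤ b) : ∫ t in a..b, u' t = u b - u a := by
  apply intervalIntegral.integral_eq_sub_of_hasDeriv_right_of_le hab
  · exact h.contOn.mono (Set.Icc_subset_Icc ha hb)
  · intro t ht
    exact (h.derivAt ⟨lt_of_le_of_lt ha ht.1, lt_of_lt_of_le ht.2 hb⟩).hasDerivWithinAt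
  · exact h.ii_u' ha hb hab

lemma IsC2AC.ftc2 (h : IsC2AC u u' u'') {a b : ℝ} (ha : 0 ≤ a) (hb : b ≤ Real.pi)
    (hab : a ≤ b) : ∫ t in a..b, u'' t = u' b - u' a := by
  have h1 := h.2.2.2 a ⟨ha, hab.trans hb⟩
  have h2 := h.2.2.2 b ⟨ha.trans hab, hb⟩
  have hia : IntervalIntegrable u'' volume 0 a := h.ii_u'' le_rfl (hab.trans hb) ha
  have hib : IntervalIntegrable u'' volume 0 b := h.ii_u'' le_rfl hb (ha.trans hab)
  rw [h1, h2]
  rw [← intervalIntegral.integral_interval_sub_left hib hia]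
  ring

lemma swap_aux {a b : ℝ} (hab : a ≤ b) {f g : ℝ → ℝ}
    (hf : IntegrableOn f (Ioc a b) volume) (hg : IntegrableOn g (Ioc a b) volume) :
    ∫ t in Ioc a b, f t * (∫ s in Ioc a t, g s) =
      ∫ s in Ioc a b, (∫ t in Ioc s b, f t) * g s := by
  set ν := volume.restrict (Ioc a b) with hν
  have hK : Integrable (fun p : ℝ × ℝ => f p.1 * g p.2) (ν.prod ν) :=
    Integrable.mul_prod hf hg
  have hmeas : MeasurableSet {p : ℝ × ℝ | p.2 ≤ p.1} :=
    measurableSet_le measurable_snd measurable_fst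
  set K : ℝ × ℝ → ℝ := ({p : ℝ × ℝ | p.2 ≤ p.1}).indicator (fun p => f p.1 * g p.2) with hKdef
  have hKint : Integrable K (ν.prod ν) := hK.indicator hmeas
  have hswap := MeasureTheory.integral_integral_swap (f := fun t s => K (t, s)) (μ := ν) (ν := ν)
    (by exact hKint)
  -- LHS
  have hL : (∫ t, (∫ s, K (t, s) ∂ν) ∂ν) = ∫ t in Ioc a b, f t * (∫ s in Ioc a t, g s) := by
    apply MeasureTheory.setIntegral_congr_fun measurableSet_Ioc
    intro t ht
    show (∫ s, K (t, s) ∂ν) = f t * ∫ s in Ioc a t, g s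
    have : (fun s => K (t, s)) = fun s => (Iic t).indicator (fun s => f t * g s) s := by
      funext s
      by_cases h : s ≤ t <;> simp [hKdef, Set.indicator, h]
    rw [this, MeasureTheory.integral_indicator measurableSet_Iic]
    rw [hν, Measure.restrict_restrict measurableSet_Iic]
    have : Iic t ∩ Ioc a b = Ioc a t := by
      ext s; simp only [mem_inter_iff, mem_Iic, mem_Ioc]
      constructor
      · rintro ⟨h1, h2, h3⟩; exact ⟨h2, h1⟩
      · rintro ⟨h1, h2⟩; exact ⟨h2, h1, h2.trans ht.2⟩
    rw [this, MeasureTheory.integral_const_mul]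
  -- RHS
  have hR : (∫ s, (∫ t, K (t, s) ∂ν) ∂ν) = ∫ s in Ioc a b, (∫ t in Ioc s b, f t) * g s := by
    apply MeasureTheory.setIntegral_congr_fun measurableSet_Ioc
    intro s hs
    show (∫ t, K (t, s) ∂ν) = (∫ t in Ioc s b, f t) * g s
    have : (fun t => K (t, s)) = fun t => (Ici s).indicator (fun t => f t * g s) t := by
      funext t
      by_cases h : s ≤ t <;> simp [hKdef, Set.indicator, h]
    rw [this, MeasureTheory.integral_indicator measurableSet_Ici]
    rw [hν, Measure.restrict_restrict measurableSet_Ici]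
    have h1 : Ici s ∩ Ioc a b = Icc s b := by
      ext t; simp only [mem_inter_iff, mem_Ici, mem_Ioc, mem_Icc]
      constructor
      · rintro ⟨h1, _, h3⟩; exact ⟨h1, h3⟩
      · rintro ⟨h1, h2⟩; exact ⟨h1, hs.1.trans_le h1, h2⟩
    rw [h1, MeasureTheory.integral_Icc_eq_integral_Ioc, MeasureTheory.integral_mul_const]
  rw [hL, hR] at hswap
  exact hswap

variable {v v' v'' : ℝ → ℝ}

lemma parts_half (hu : IsC2AC u u' u'') (hv : IsC2AC v v' v'') {a b : ℝ}
    (ha : 0 ≤ a) (hb : b ≤ Real.pi) (hab : a ≤ b) :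
    ∫ x in a..b, u'' x * v x
      = u' b * v b - u' a * v a - ∫ x in a..b, u' x * v' x := by
  have hsub : Set.Icc a b ⊆ Set.Icc 0 Real.pi := Set.Icc_subset_Icc ha hb
  have huIcc : Set.uIcc a b = Set.Icc a b := Set.uIcc_of_le hab
  have hvC : ContinuousOn v (Set.Icc a b) := hv.contOn.mono hsub
  have hu'C : ContinuousOn u' (Set.Icc a b) := hu.2.1.mono hsub
  have hv'C : ContinuousOn v' (Set.Icc a b) := hv.2.1.mono hsub
  have hu''i : IntervalIntegrable u'' volume a b := hu.ii_u'' ha hb hab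
  have hv'i : IntervalIntegrable v' volume a b := hv.ii_u' ha hb hab
  have hu'i : IntervalIntegrable u' volume a b := hu.ii_u' ha hb hab
  -- step 1: pointwise on Ioc, v t = v a + ∫ s in Ioc a t, v'
  have hvrep : ∀ t ∈ Set.Ioc a b, v t = v a + ∫ s in Set.Ioc a t, v' s := by
    intro t ht
    have : ∫ s in a..t, v' s = v t - v a := hv.ftc1 ha (ht.2.trans hb) ht.1.le
    rw [← intervalIntegral.integral_of_le ht.1.le, this]; ring
  rw [intervalIntegral.integral_of_le hab]
  have Ifv : IntegrableOn (fun t => u'' t * v t) (Set.Ioc a b) volume :=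
    (hu''i.mul_continuousOn (by rwa [huIcc])).1
  have hprimC : ContinuousOn (fun t => ∫ s in Set.Ioc a t, v' s) (Set.uIcc a b) := by
    rw [huIcc]
    exact intervalIntegral.continuousOn_primitive (hv'C.integrableOn_Icc)
  have Iprim : IntegrableOn (fun t => u'' t * ∫ s in Set.Ioc a t, v' s) (Set.Ioc a b) volume :=
    (hu''i.mul_continuousOn hprimC).1
  have step1 : ∫ t in Set.Ioc a b, u'' t * v t
      = ∫ t in Set.Ioc a b, (u'' t * v a + u'' t * ∫ s in Set.Ioc a t, v' s) := by
    apply setIntegral_congr_fun measurableSet_Ioc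
    intro t ht
    show u'' t * v t = u'' t * v a + u'' t * ∫ s in Set.Ioc a t, v' s
    rw [hvrep t ht]; ring
  rw [step1, integral_add (hu''i.1.mul_const _) Iprim]
  -- swap the double integral
  rw [swap_aux hab hu''i.1 hv'i.1]
  have step2 : ∫ s in Set.Ioc a b, (∫ t in Set.Ioc s b, u'' t) * v' s
      = ∫ s in Set.Ioc a b, (u' b * v' s - u' s * v' s) := by
    apply setIntegral_congr_fun measurableSet_Ioc
    intro s hs
    have : ∫ t in Set.Ioc s b, u'' t = u' b - u' s := by
      rw [← intervalIntegral.integral_of_le hs.2]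
      exact hu.ftc2 (ha.trans hs.1.le) hb hs.2
    rw [show (fun x => (∫ t in Set.Ioc x b, u'' t) * v' x) s = (∫ t in Set.Ioc s b, u'' t) * v' s from rfl, this]; ring
  have hmul : IntervalIntegrable (fun x => u' x * v' x) volume a b := by
    apply hu'i.mul_continuousOn; rwa [huIcc]
  rw [step2, integral_sub (hv'i.1.const_mul _) hmul.1]
  have e1 : ∫ t in Set.Ioc a b, u'' t = u' b - u' a := by
    rw [← intervalIntegral.integral_of_le hab]; exact hu.ftc2 ha hb hab
  have e2 : ∫ s in Set.Ioc a b, v' s = v b - v a := by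
    rw [← intervalIntegral.integral_of_le hab]; exact hv.ftc1 ha hb hab
  rw [MeasureTheory.integral_mul_const, MeasureTheory.integral_const_mul, e1, e2,
    ← intervalIntegral.integral_of_le hab]
  ring

lemma wronskian_ftc (hu : IsC2AC u u' u'') (hv : IsC2AC v v' v'') {a b : ℝ}
    (ha : 0 ≤ a) (hb : b ≤ Real.pi) (hab : a ≤ b) :
    (u' b * v b - u b * v' b) - (u' a * v a - u a * v' a)
      = ∫ x in a..b, (u'' x * v x - v'' x * u x) := by
  have hsub : Set.Icc a b ⊆ Set.Icc 0 Real.pi := Set.Icc_subset_Icc ha hb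
  have huIcc : Set.uIcc a b = Set.Icc a b := Set.uIcc_of_le hab
  have h1 := parts_half hu hv ha hb hab
  have h2 := parts_half hv hu ha hb hab
  have i1 : IntervalIntegrable (fun x => u'' x * v x) volume a b :=
    (hu.ii_u'' ha hb hab).mul_continuousOn (by rw [huIcc]; exact hv.contOn.mono hsub)
  have i2 : IntervalIntegrable (fun x => v'' x * u x) volume a b :=
    (hv.ii_u'' ha hb hab).mul_continuousOn (by rw [huIcc]; exact hu.contOn.mono hsub)
  rw [intervalIntegral.integral_sub i1 i2, h1, h2]
  have : ∫ x in a..b, v' x * u' x = ∫ x in a..b, u' x * v' x := by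
    apply intervalIntegral.integral_congr; intro x _; ring
  rw [this]
  ring

lemma nebot_left {a b : ℝ} (hab : a < b) : (nhdsWithin a (Set.Ioo a b)).NeBot := by
  rw [← mem_closure_iff_nhdsWithin_neBot, closure_Ioo hab.ne]
  exact ⟨le_rfl, hab.le⟩

lemma nebot_right {a b : ℝ} (hab : a < b) : (nhdsWithin b (Set.Ioo a b)).NeBot := by
  rw [← mem_closure_iff_nhdsWithin_neBot, closure_Ioo hab.ne]
  exact ⟨hab.le, le_rfl⟩

lemma nonneg_left {f : ℝ → ℝ} {a b : ℝ} (hab : a < b)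
    (hf : ContinuousWithinAt f (Set.Ioo a b) a)
    (hpos : ∀ x ∈ Set.Ioo a b, 0 < f x) : 0 ≤ f a := by
  haveI := nebot_left hab
  exact ge_of_tendsto hf (eventually_mem_nhdsWithin.mono fun x hx => (hpos x hx).le)

lemma nonneg_right {f : ℝ → ℝ} {a b : ℝ} (hab : a < b)
    (hf : ContinuousWithinAt f (Set.Ioo a b) b)
    (hpos : ∀ x ∈ Set.Ioo a b, 0 < f x) : 0 ≤ f b := by
  haveI := nebot_right hab
  exact ge_of_tendsto hf (eventually_mem_nhdsWithin.mono fun x hx => (hpos x hx).le)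

lemma deriv_nonneg_left {f : ℝ → ℝ} {d a b : ℝ} (hab : a < b)
    (hd : HasDerivWithinAt f d (Set.Ioo a b) a) (h0 : f a = 0)
    (hpos : ∀ x ∈ Set.Ioo a b, 0 < f x) : 0 ≤ d := by
  haveI := nebot_left hab
  rw [hasDerivWithinAt_iff_tendsto_slope, Set.diff_singleton_eq_self (fun h => h.1.ne rfl)] at hd
  apply ge_of_tendsto hd
  apply eventually_mem_nhdsWithin.mono
  intro x hx
  have : slope f a x = f x / (x - a) := by
    rw [slope_def_field, h0]; ring
  rw [this]
  apply div_nonneg (hpos x hx).le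
  linarith [hx.1]

lemma deriv_nonpos_right {f : ℝ → ℝ} {d a b : ℝ} (hab : a < b)
    (hd : HasDerivWithinAt f d (Set.Ioo a b) b) (h0 : f b = 0)
    (hpos : ∀ x ∈ Set.Ioo a b, 0 < f x) : d ≤ 0 := by
  haveI := nebot_right hab
  rw [hasDerivWithinAt_iff_tendsto_slope, Set.diff_singleton_eq_self (fun h => h.2.ne rfl)] at hd
  apply le_of_tendsto hd
  apply eventually_mem_nhdsWithin.mono
  intro x hx
  have : slope f b x = f x / (x - b) := by
    rw [slope_def_field, h0]; ring
  rw [this]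
  apply div_nonpos_of_nonneg_of_nonpos (hpos x hx).le
  linarith [hx.2]

lemma bc_det {α u0 u0' v0 v0' : ℝ} (h1 : u0 * Real.cos α + u0' * Real.sin α = 0)
    (h2 : v0 * Real.cos α + v0' * Real.sin α = 0) : u0' * v0 - u0 * v0' = 0 := by
  have h3 := Real.sin_sq_add_cos_sq α
  have e1 : Real.sin α * (u0' * v0 - u0 * v0') = 0 := by linear_combination v0 * h1 - u0 * h2
  have e2 : Real.cos α * (u0' * v0 - u0 * v0') = 0 := by linear_combination u0' * h2 - v0' * h1
  have : (u0' * v0 - u0 * v0') * (Real.sin α ^ 2 + Real.cos α ^ 2) = 0 := by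
    linear_combination Real.sin α * e1 + Real.cos α * e2
  rw [h3, mul_one] at this
  exact this

lemma sign_const {f : ℝ → ℝ} {a b : ℝ} (hab : a < b)
    (hcont : ContinuousOn f (Set.Icc a b))
    (hne : ∀ x ∈ Set.Ioo a b, f x ≠ 0) :
    (∀ x ∈ Set.Ioo a b, 0 < f x) ∨ (∀ x ∈ Set.Ioo a b, f x < 0) := by
  by_contra h
  push_neg at h
  obtain ⟨⟨x₁, hx₁, hfx₁⟩, ⟨x₂, hx₂, hfx₂⟩⟩ := h
  have hfx₁' : f x₁ < 0 := lt_of_le_of_ne hfx₁ (hne x₁ hx₁)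
  have hfx₂' : 0 < f x₂ := lt_of_le_of_ne hfx₂ (fun h => hne x₂ hx₂ h.symm)
  have hsub : Set.uIcc x₁ x₂ ⊆ Set.Ioo a b := by
    exact Set.OrdConnected.uIcc_subset Set.ordConnected_Ioo hx₁ hx₂

  have := intermediate_value_uIcc (hcont.mono (hsub.trans Set.Ioo_subset_Icc_self))
  have h0 : (0:ℝ) ∈ Set.uIcc (f x₁) (f x₂) := by
    rw [Set.mem_uIcc]; left; exact ⟨hfx₁'.le, hfx₂'.le⟩
  obtain ⟨c, hc, hfc⟩ := this h0
  exact hne c (hsub hc) hfc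

-- CORE section, to append inside work.lean Helpers (has μI, BC in scope in final)
lemma core {q₀ : ℝ → ℝ} {α lam mu : ℝ} (hlam : lam ≤ mu)
    {U U' U'' V V' V'' : ℝ → ℝ}
    (hU : IsC2AC U U' U'') (hV : IsC2AC V V' V'')
    (equU : ∀ᵐ x ∂μI, -U'' x + q₀ x * U x = lam * U x + (-1) * U x ^ 3)
    (equV : ∀ᵐ x ∂μI, -V'' x + q₀ x * V x = mu * V x)
    (bcU : BC α U U') (bcV : BC α V V')
    {a b : ℝ} (ha : 0 ≤ a) (hab : a < b) (hb : b ≤ Real.pi)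
    (hUpos : ∀ x ∈ Set.Ioo a b, 0 < U x)
    (hVpos : ∀ x ∈ Set.Ioo a b, 0 < V x)
    (haU : a = 0 ∨ U a = 0) (hbU : b = Real.pi ∨ U b = 0) : False := by
  have hmemIcc : Set.Icc a b ⊆ Set.Icc 0 Real.pi := Set.Icc_subset_Icc ha hb
  have hIooSub : Set.Ioo a b ⊆ Set.Icc 0 Real.pi :=
    Set.Subset.trans Set.Ioo_subset_Icc_self hmemIcc
  have key := wronskian_ftc hU hV ha hb hab.le
  set g : ℝ → ℝ := fun x => (mu - lam + U x ^ 2) * (U x * V x) with hg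
  have hcongr : ∫ x in a..b, (U'' x * V x - V'' x * U x) = ∫ x in a..b, g x := by
    apply intervalIntegral.integral_congr_ae
    have hU' := (ae_restrict_iff' measurableSet_Ioo).mp equU
    have hV' := (ae_restrict_iff' measurableSet_Ioo).mp equV
    have hne : ∀ᵐ (x:ℝ) ∂volume, x ≠ Real.pi := by
      rw [MeasureTheory.ae_iff]
      have : {x : ℝ | ¬ x ≠ Real.pi} = {Real.pi} := by ext x; simp
      rw [this]
      exact Real.volume_singleton
    filter_upwards [hU', hV', hne] with x h1 h2 h3 hx
    rw [Set.uIoc_of_le hab.le] at hx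
    have hmem : x ∈ Set.Ioo 0 Real.pi :=
      ⟨lt_of_le_of_lt ha hx.1, lt_of_le_of_ne (hx.2.trans hb) h3⟩
    have e1 := h1 hmem
    have e2 := h2 hmem
    show U'' x * V x - V'' x * U x = (mu - lam + U x ^ 2) * (U x * V x)
    linear_combination (-(V x)) * e1 + (U x) * e2
  have hUc : ContinuousOn U (Set.Icc a b) := hU.contOn.mono hmemIcc
  have hVc : ContinuousOn V (Set.Icc a b) := hV.contOn.mono hmemIcc
  have hgpos : 0 < ∫ x in a..b, g x := by
    apply intervalIntegral.intervalIntegral_pos_of_pos_on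
    · apply ContinuousOn.intervalIntegrable
      rw [Set.uIcc_of_le hab.le]
      exact (continuousOn_const.add (hUc.pow 2)).mul (hUc.mul hVc)
    · intro x hx
      have h1 := hUpos x hx
      have h2 := hVpos x hx
      have h3 : 0 < mu - lam + U x ^ 2 := by nlinarith
      exact mul_pos h3 (mul_pos h1 h2)
    · exact hab
  have hWa : 0 ≤ U' a * V a - U a * V' a := by
    rcases haU with h | h
    · subst h; exact (bc_det bcU.1 bcV.1).ge
    · have hua' : 0 ≤ U' a :=
        deriv_nonneg_left hab ((hU.1 a (hmemIcc ⟨le_rfl, hab.le⟩)).mono hIooSub) h hUpos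
      have hva : 0 ≤ V a :=
        nonneg_left hab ((hVc a ⟨le_rfl, hab.le⟩).mono Set.Ioo_subset_Icc_self) hVpos
      rw [h]
      nlinarith [mul_nonneg hua' hva]
  have hWb : U' b * V b - U b * V' b ≤ 0 := by
    rcases hbU with h | h
    · subst h; exact (bc_det bcU.2 bcV.2).le
    · have hub' : U' b ≤ 0 :=
        deriv_nonpos_right hab ((hU.1 b (hmemIcc ⟨hab.le, le_rfl⟩)).mono hIooSub) h hUpos
      have hvb : 0 ≤ V b :=
        nonneg_right hab ((hVc b ⟨hab.le, le_rfl⟩).mono Set.Ioo_subset_Icc_self) hVpos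
      rw [h]
      nlinarith [mul_nonpos_of_nonpos_of_nonneg hub' hvb]
  rw [hcongr] at key
  linarith

lemma IsC2AC.constMul {u u' u'' : ℝ → ℝ} (h : IsC2AC u u' u'') (ε : ℝ) :
    IsC2AC (fun x => ε * u x) (fun x => ε * u' x) (fun x => ε * u'' x) := by
  refine ⟨fun x hx => (h.1 x hx).const_mul ε, continuousOn_const.mul h.2.1,
    (h.2.2.1).const_mul ε, fun x hx => ?_⟩
  show ε * u' x = ε * u' 0 + ∫ t in (0:ℝ)..x, ε * u'' t
  rw [intervalIntegral.integral_const_mul, h.2.2.2 x hx]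
  ring

lemma BC.constMul {α : ℝ} {u u' : ℝ → ℝ} (h : BC α u u') (ε : ℝ) :
    BC α (fun x => ε * u x) (fun x => ε * u' x) := by
  constructor
  · have := h.1; dsimp only; linear_combination ε * this
  · have := h.2; dsimp only; linear_combination ε * this

lemma lemA {q₀ : ℝ → ℝ} {α lam mu : ℝ} (hlam : lam ≤ mu)
    {u u' u'' v v' v'' : ℝ → ℝ}
    (hu : IsC2AC u u' u'') (hv : IsC2AC v v' v'')
    (equ : ∀ᵐ x ∂μI, -u'' x + q₀ x * u x = lam * u x + (-1) * u x ^ 3)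
    (eqv : ∀ᵐ x ∂μI, -v'' x + q₀ x * v x = mu * v x)
    (bcu : BC α u u') (bcv : BC α v v')
    {c b : ℝ} (hc : 0 ≤ c) (hcb : c < b) (hbπ : b ≤ Real.pi)
    (hcU : c = 0 ∨ u c = 0) (hbU : b = Real.pi ∨ u b = 0)
    (hne : ∀ x ∈ Set.Ioo c b, u x ≠ 0) : ∃ y ∈ Set.Ioo c b, v y = 0 := by
  by_contra hcon
  push_neg at hcon
  have hmemIcc : Set.Icc c b ⊆ Set.Icc 0 Real.pi := Set.Icc_subset_Icc hc hbπ
  obtain ⟨ε, hε, hupos⟩ : ∃ ε : ℝ, (ε = 1 ∨ ε = -1) ∧ ∀ x ∈ Set.Ioo c b, 0 < ε * u x := by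
    rcases sign_const hcb (hu.contOn.mono hmemIcc) hne with h | h
    · exact ⟨1, Or.inl rfl, fun x hx => by simpa using h x hx⟩
    · exact ⟨-1, Or.inr rfl, fun x hx => by have := h x hx; nlinarith⟩
  obtain ⟨η, hη, hvpos⟩ : ∃ η : ℝ, (η = 1 ∨ η = -1) ∧ ∀ x ∈ Set.Ioo c b, 0 < η * v x := by
    rcases sign_const hcb (hv.contOn.mono hmemIcc) hcon with h | h
    · exact ⟨1, Or.inl rfl, fun x hx => by simpa using h x hx⟩
    · exact ⟨-1, Or.inr rfl, fun x hx => by have := h x hx; nlinarith⟩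
  have hε3 : ε ^ 3 = ε := by rcases hε with h | h <;> rw [h] <;> norm_num
  apply core (q₀ := q₀) (α := α) hlam (hu.constMul ε) (hv.constMul η) ?_ ?_
    (bcu.constMul ε) (bcv.constMul η) hc hcb hbπ hupos hvpos ?_ ?_
  · filter_upwards [equ] with x hx
    show -(ε * u'' x) + q₀ x * (ε * u x) = lam * (ε * u x) + (-1) * (ε * u x) ^ 3
    have : (ε * u x) ^ 3 = ε * u x ^ 3 := by
      rw [mul_pow, hε3]
    rw [this]
    linear_combination ε * hx
  · filter_upwards [eqv] with x hx
    show -(η * v'' x) + q₀ x * (η * v x) = mu * (η * v x)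
    linear_combination η * hx
  · rcases hcU with h | h
    · exact Or.inl h
    · exact Or.inr (by rw [h, mul_zero])
  · rcases hbU with h | h
    · exact Or.inl h
    · exact Or.inr (by rw [h, mul_zero])

lemma acc_zero_deriv {u u' u'' : ℝ → ℝ} (hu : IsC2AC u u' u'') {c : ℝ}
    (hc : c ∈ Set.Icc 0 Real.pi)
    (hacc : (nhdsWithin c (ZeroSet u \ {c})).NeBot)
    (hzs : ∀ z ∈ ZeroSet u \ {c}, u z = 0) :
    u c = 0 ∧ u' c = 0 := by
  have hsub : ZeroSet u \ {c} ⊆ Set.Icc 0 Real.pi := fun z hz =>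
    Set.Ioo_subset_Icc_self hz.1.1
  have huc : u c = 0 := by
    have ht : Filter.Tendsto u (nhdsWithin c (ZeroSet u \ {c})) (nhds (u c)) :=
      ((hu.contOn c hc).mono hsub)
    have ht0 : Filter.Tendsto u (nhdsWithin c (ZeroSet u \ {c})) (nhds 0) := by
      apply Filter.Tendsto.congr' _ tendsto_const_nhds
      filter_upwards [eventually_mem_nhdsWithin] with z hz using (hzs z hz).symm
    exact tendsto_nhds_unique ht ht0
  refine ⟨huc, ?_⟩
  have hd := (hu.1 c hc)
  rw [hasDerivWithinAt_iff_tendsto_slope] at hd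
  have hd' : Filter.Tendsto (slope u c) (nhdsWithin c (ZeroSet u \ {c})) (nhds (u' c)) :=
    hd.mono_left (nhdsWithin_mono c (fun z hz => ⟨hsub hz, hz.2⟩))
  have ht0 : Filter.Tendsto (slope u c) (nhdsWithin c (ZeroSet u \ {c})) (nhds 0) := by
    apply Filter.Tendsto.congr' _ tendsto_const_nhds
    filter_upwards [eventually_mem_nhdsWithin] with z hz
    rw [slope_def_field, hzs z hz, huc]
    simp
  exact tendsto_nhds_unique hd' ht0

lemma local_vanish_right {u u' u'' h : ℝ → ℝ} (hu : IsC2AC u u' u'')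
    (hh : IntervalIntegrable h volume 0 Real.pi) (hposh : ∀ x, 0 ≤ h x)
    (hb : ∀ᵐ x ∂volume, x ∈ Set.Ioo 0 Real.pi → |u'' x| ≤ h x * |u x|)
    {c d : ℝ} (hc : 0 ≤ c) (hcd : c ≤ d) (hdπ : d ≤ Real.pi)
    (h0 : u c = 0) (h0' : u' c = 0)
    (hsmall : (d - c) * ∫ t in c..d, h t < 1) :
    ∀ y ∈ Set.Icc c d, u y = 0 := by
  have hsub : Set.Icc c d ⊆ Set.Icc 0 Real.pi := Set.Icc_subset_Icc hc hdπ
  have hucont : ContinuousOn (fun x => |u x|) (Set.Icc c d) := (hu.contOn.mono hsub).abs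
  obtain ⟨y₀, hy₀, hmax⟩ := isCompact_Icc.exists_isMaxOn (Set.nonempty_Icc.2 hcd) hucont
  set M := |u y₀| with hM
  have hMnonneg : 0 ≤ M := abs_nonneg _
  set E := (∫ t in c..d, h t) with hE
  have hEnonneg : 0 ≤ E := intervalIntegral.integral_nonneg hcd (fun t _ => hposh t)
  have hhi : IntervalIntegrable h volume c d := hh.mono_set
    (by rw [Set.uIcc_of_le hcd, Set.uIcc_of_le Real.pi_nonneg]; exact hsub)
  have hpine : ∀ᵐ (x : ℝ) ∂volume, x ≠ Real.pi := by
    rw [MeasureTheory.ae_iff]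
    have : {x : ℝ | ¬x ≠ Real.pi} = {Real.pi} := by ext x; simp
    rw [this]; exact Real.volume_singleton
  have hu'bound : ∀ y ∈ Set.Icc c d, |u' y| ≤ M * E := by
    intro y hy
    have hydπ : y ≤ Real.pi := hy.2.trans hdπ
    have hftc : ∫ t in c..y, u'' t = u' y := by
      rw [hu.ftc2 hc hydπ hy.1, h0', sub_zero]
    have hhy : IntervalIntegrable h volume c y := hh.mono_set
      (by rw [Set.uIcc_of_le hy.1, Set.uIcc_of_le Real.pi_nonneg]
          exact Set.Icc_subset_Icc hc hydπ)
    have hae : ∀ᵐ t ∂volume.restrict (Set.uIoc c y), ‖u'' t‖ ≤ h t * M := by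
      rw [Set.uIoc_of_le hy.1, ae_restrict_iff' measurableSet_Ioc]
      filter_upwards [hb, hpine] with t ht htne hmem
      have htIoo : t ∈ Set.Ioo 0 Real.pi :=
        ⟨lt_of_le_of_lt hc hmem.1, lt_of_le_of_ne (hmem.2.trans hydπ) htne⟩
      have h1 := ht htIoo
      have h2 : |u t| ≤ M := hmax ⟨hmem.1.le, hmem.2.trans hy.2⟩
      calc ‖u'' t‖ = |u'' t| := rfl
        _ ≤ h t * |u t| := h1
        _ ≤ h t * M := mul_le_mul_of_nonneg_left h2 (hposh t)
    have hle : |u' y| ≤ |∫ t in c..y, h t * M| := by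
      rw [← hftc]
      exact intervalIntegral.norm_integral_le_abs_of_norm_le hae (hhy.mul_const M)
    have heq : ∫ t in c..y, h t * M = (∫ t in c..y, h t) * M := by
      rw [intervalIntegral.integral_mul_const]
    have hmono : ∫ t in c..y, h t ≤ E := by
      apply intervalIntegral.integral_mono_interval le_rfl hy.1 hy.2
        (Filter.Eventually.of_forall (fun t => hposh t)) hhi
    have hnn : 0 ≤ ∫ t in c..y, h t :=
      intervalIntegral.integral_nonneg hy.1 (fun t _ => hposh t)
    calc |u' y| ≤ |∫ t in c..y, h t * M| := hle
      _ = (∫ t in c..y, h t) * M := by rw [heq, abs_of_nonneg (mul_nonneg hnn hMnonneg)]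
      _ ≤ E * M := mul_le_mul_of_nonneg_right hmono hMnonneg
      _ = M * E := mul_comm _ _
  have hubound : ∀ y ∈ Set.Icc c d, |u y| ≤ M * E * (d - c) := by
    intro y hy
    have hydπ : y ≤ Real.pi := hy.2.trans hdπ
    have hftc : ∫ t in c..y, u' t = u y := by
      rw [hu.ftc1 hc hydπ hy.1, h0, sub_zero]
    have : ‖∫ t in c..y, u' t‖ ≤ M * E * |y - c| := by
      apply intervalIntegral.norm_integral_le_of_norm_le_const
      intro x hx
      rw [Set.uIoc_of_le hy.1] at hx
      exact hu'bound x ⟨hx.1.le, hx.2.trans hy.2⟩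
    rw [hftc] at this
    calc |u y| ≤ M * E * |y - c| := this
      _ ≤ M * E * (d - c) := by
        apply mul_le_mul_of_nonneg_left _ (mul_nonneg hMnonneg hEnonneg)
        rw [abs_of_nonneg (by linarith [hy.1])]
        linarith [hy.2]
  have hM0 : M = 0 := by
    have := hubound y₀ hy₀
    nlinarith
  intro y hy
  have h1 : |u y| ≤ M := hmax hy
  rw [hM0] at h1
  have := abs_nonneg (u y)
  have : |u y| = 0 := le_antisymm h1 this
  exact abs_eq_zero.mp this

lemma local_vanish_left {u u' u'' h : ℝ → ℝ} (hu : IsC2AC u u' u'')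
    (hh : IntervalIntegrable h volume 0 Real.pi) (hposh : ∀ x, 0 ≤ h x)
    (hb : ∀ᵐ x ∂volume, x ∈ Set.Ioo 0 Real.pi → |u'' x| ≤ h x * |u x|)
    {d c : ℝ} (hd : 0 ≤ d) (hdc : d ≤ c) (hcπ : c ≤ Real.pi)
    (h0 : u c = 0) (h0' : u' c = 0)
    (hsmall : (c - d) * ∫ t in d..c, h t < 1) :
    ∀ y ∈ Set.Icc d c, u y = 0 := by
  have hsub : Set.Icc d c ⊆ Set.Icc 0 Real.pi := Set.Icc_subset_Icc hd hcπ
  have hucont : ContinuousOn (fun x => |u x|) (Set.Icc d c) := (hu.contOn.mono hsub).abs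
  obtain ⟨y₀, hy₀, hmax⟩ := isCompact_Icc.exists_isMaxOn (Set.nonempty_Icc.2 hdc) hucont
  set M := |u y₀| with hM
  have hMnonneg : 0 ≤ M := abs_nonneg _
  set E := (∫ t in d..c, h t) with hE
  have hEnonneg : 0 ≤ E := intervalIntegral.integral_nonneg hdc (fun t _ => hposh t)
  have hhi : IntervalIntegrable h volume d c := hh.mono_set
    (by rw [Set.uIcc_of_le hdc, Set.uIcc_of_le Real.pi_nonneg]; exact hsub)
  have hpine : ∀ᵐ (x : ℝ) ∂volume, x ≠ Real.pi := by
    rw [MeasureTheory.ae_iff]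
    have : {x : ℝ | ¬x ≠ Real.pi} = {Real.pi} := by ext x; simp
    rw [this]; exact Real.volume_singleton
  have hu'bound : ∀ y ∈ Set.Icc d c, |u' y| ≤ M * E := by
    intro y hy
    have hy0 : 0 ≤ y := hd.trans hy.1
    have hftc : ∫ t in y..c, u'' t = - u' y := by
      rw [hu.ftc2 hy0 hcπ hy.2, h0', zero_sub]
    have hhy : IntervalIntegrable h volume y c := hh.mono_set
      (by rw [Set.uIcc_of_le hy.2, Set.uIcc_of_le Real.pi_nonneg]
          exact Set.Icc_subset_Icc hy0 hcπ)
    have hae : ∀ᵐ t ∂volume.restrict (Set.uIoc y c), ‖u'' t‖ ≤ h t * M := by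
      rw [Set.uIoc_of_le hy.2, ae_restrict_iff' measurableSet_Ioc]
      filter_upwards [hb, hpine] with t ht htne hmem
      have htIoo : t ∈ Set.Ioo 0 Real.pi :=
        ⟨lt_of_le_of_lt hy0 hmem.1, lt_of_le_of_ne (hmem.2.trans hcπ) htne⟩
      have h1 := ht htIoo
      have h2 : |u t| ≤ M := hmax ⟨hy.1.trans hmem.1.le, hmem.2⟩
      calc ‖u'' t‖ = |u'' t| := rfl
        _ ≤ h t * |u t| := h1
        _ ≤ h t * M := mul_le_mul_of_nonneg_left h2 (hposh t)
    have hle : |u' y| ≤ |∫ t in y..c, h t * M| := by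
      rw [show |u' y| = ‖∫ t in y..c, u'' t‖ by rw [hftc]; exact (abs_neg _).symm]
      exact intervalIntegral.norm_integral_le_abs_of_norm_le hae (hhy.mul_const M)
    have heq : ∫ t in y..c, h t * M = (∫ t in y..c, h t) * M := by
      rw [intervalIntegral.integral_mul_const]
    have hmono : ∫ t in y..c, h t ≤ E := by
      apply intervalIntegral.integral_mono_interval hy.1 hy.2 le_rfl
        (Filter.Eventually.of_forall (fun t => hposh t)) hhi
    have hnn : 0 ≤ ∫ t in y..c, h t :=
      intervalIntegral.integral_nonneg hy.2 (fun t _ => hposh t)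
    calc |u' y| ≤ |∫ t in y..c, h t * M| := hle
      _ = (∫ t in y..c, h t) * M := by rw [heq, abs_of_nonneg (mul_nonneg hnn hMnonneg)]
      _ ≤ E * M := mul_le_mul_of_nonneg_right hmono hMnonneg
      _ = M * E := mul_comm _ _
  have hubound : ∀ y ∈ Set.Icc d c, |u y| ≤ M * E * (c - d) := by
    intro y hy
    have hy0 : 0 ≤ y := hd.trans hy.1
    have hftc : ∫ t in y..c, u' t = - u y := by
      rw [hu.ftc1 hy0 hcπ hy.2, h0, zero_sub]
    have : ‖∫ t in y..c, u' t‖ ≤ M * E * |c - y| := by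
      apply intervalIntegral.norm_integral_le_of_norm_le_const
      intro x hx
      rw [Set.uIoc_of_le hy.2] at hx
      exact hu'bound x ⟨hy.1.trans hx.1.le, hx.2⟩
    rw [hftc] at this
    rw [norm_neg] at this
    calc |u y| ≤ M * E * |c - y| := this
      _ ≤ M * E * (c - d) := by
        apply mul_le_mul_of_nonneg_left _ (mul_nonneg hMnonneg hEnonneg)
        rw [abs_of_nonneg (by linarith [hy.2])]
        linarith [hy.1]
  have hM0 : M = 0 := by
    have := hubound y₀ hy₀
    nlinarith
  intro y hy
  have h1 : |u y| ≤ M := hmax hy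
  rw [hM0] at h1
  exact abs_eq_zero.mp (le_antisymm h1 (abs_nonneg _))

lemma vanish_right {u u' u'' h : ℝ → ℝ} (hu : IsC2AC u u' u'')
    (hh : IntervalIntegrable h volume 0 Real.pi) (hposh : ∀ x, 0 ≤ h x)
    (hb : ∀ᵐ x ∂volume, x ∈ Set.Ioo 0 Real.pi → |u'' x| ≤ h x * |u x|)
    {c : ℝ} (hc : c ∈ Set.Icc 0 Real.pi)
    (h0 : u c = 0) (h0' : u' c = 0) : ∀ y ∈ Set.Icc c Real.pi, u y = 0 := by
  set B := {x ∈ Set.Icc c Real.pi | ∀ y ∈ Set.Icc c x, u y = 0} with hB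
  have hcB : c ∈ B := ⟨⟨le_rfl, hc.2⟩, fun y hy => by
    have : y = c := le_antisymm hy.2 hy.1
    rw [this]; exact h0⟩
  have hbdd : BddAbove B := ⟨Real.pi, fun x hx => hx.1.2⟩
  set s := sSup B with hs
  have hcs : c ≤ s := le_csSup hbdd hcB
  have hsπ : s ≤ Real.pi := csSup_le ⟨c, hcB⟩ (fun x hx => hx.1.2)
  have hsIcc : s ∈ Set.Icc 0 Real.pi := ⟨hc.1.trans hcs, hsπ⟩
  have hzero : ∀ y ∈ Set.Ico c s, u y = 0 := by
    intro y hy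
    obtain ⟨x, hxB, hyx⟩ := exists_lt_of_lt_csSup ⟨c, hcB⟩ hy.2
    exact hxB.2 y ⟨hy.1, hyx.le⟩
  have hus : u s = 0 := by
    rcases eq_or_lt_of_le hcs with hh' | hh'
    · rw [← hh']; exact h0
    · haveI : (nhdsWithin s (Set.Ico c s)).NeBot := by
        rw [← mem_closure_iff_nhdsWithin_neBot, closure_Ico hh'.ne]
        exact ⟨hcs, le_rfl⟩
      have hsub' : Set.Ico c s ⊆ Set.Icc 0 Real.pi :=
        fun z hz => ⟨hc.1.trans hz.1, hz.2.le.trans hsπ⟩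
      have ht : Filter.Tendsto u (nhdsWithin s (Set.Ico c s)) (nhds (u s)) :=
        (hu.contOn s hsIcc).mono hsub'
      have ht0 : Filter.Tendsto u (nhdsWithin s (Set.Ico c s)) (nhds 0) := by
        apply Filter.Tendsto.congr' _ tendsto_const_nhds
        filter_upwards [eventually_mem_nhdsWithin] with z hz using (hzero z hz).symm
      exact tendsto_nhds_unique ht ht0
  have hus' : u' s = 0 := by
    rcases eq_or_lt_of_le hcs with hh' | hh'
    · rw [← hh']; exact h0'
    · haveI : (nhdsWithin s (Set.Ico c s)).NeBot := by
        rw [← mem_closure_iff_nhdsWithin_neBot, closure_Ico hh'.ne]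
        exact ⟨hcs, le_rfl⟩
      have hsub' : Set.Ico c s ⊆ Set.Icc 0 Real.pi \ {s} :=
        fun z hz => ⟨⟨hc.1.trans hz.1, hz.2.le.trans hsπ⟩, fun hzz => (lt_irrefl s (hzz ▸ hz.2))⟩
      have hd := (hu.1 s hsIcc)
      rw [hasDerivWithinAt_iff_tendsto_slope] at hd
      have hd' : Filter.Tendsto (slope u s) (nhdsWithin s (Set.Ico c s)) (nhds (u' s)) :=
        hd.mono_left (nhdsWithin_mono s hsub')
      have ht0 : Filter.Tendsto (slope u s) (nhdsWithin s (Set.Ico c s)) (nhds 0) := by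
        apply Filter.Tendsto.congr' _ tendsto_const_nhds
        filter_upwards [eventually_mem_nhdsWithin] with z hz
        rw [slope_def_field, hzero z hz, hus]
        simp
      exact tendsto_nhds_unique hd' ht0
  rcases eq_or_lt_of_le hsπ with hfin | hlt
  · intro y hy
    rcases eq_or_lt_of_le hy.2 with h' | h'
    · rw [h', ← hfin]; exact hus
    · exact hzero y ⟨hy.1, hfin ▸ h'⟩
  · exfalso
    -- find d slightly to the right of s with small (d - s) * ∫ h
    have hhint : IntegrableOn h (Set.Icc s Real.pi) volume := by
      rw [integrableOn_Icc_iff_integrableOn_Ioc]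
      exact hh.1.mono_set (Set.Ioc_subset_Ioc hsIcc.1 le_rfl)
    have hG : ContinuousOn (fun x => (x - s) * ∫ t in Set.Ioc s x, h t) (Set.Icc s Real.pi) :=
      ((continuousOn_id.sub continuousOn_const)).mul
        (intervalIntegral.continuousOn_primitive hhint)
    have hGs : ContinuousWithinAt (fun x => (x - s) * ∫ t in Set.Ioc s x, h t)
        (Set.Icc s Real.pi) s := hG s ⟨le_rfl, hsπ⟩
    have hev : ∀ᶠ x in nhdsWithin s (Set.Icc s Real.pi),
        (x - s) * (∫ t in Set.Ioc s x, h t) < 1 := by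
      have h1 : Filter.Tendsto (fun x => (x - s) * ∫ t in Set.Ioc s x, h t)
          (nhdsWithin s (Set.Icc s Real.pi))
          (nhds ((s - s) * ∫ t in Set.Ioc s s, h t)) := hGs
      rw [show (s - s) * ∫ t in Set.Ioc s s, h t = 0 by simp] at h1
      exact h1 (Iio_mem_nhds one_pos)
    haveI : (nhdsWithin s (Set.Ioc s Real.pi)).NeBot := by
      rw [← mem_closure_iff_nhdsWithin_neBot, closure_Ioc hlt.ne]
      exact ⟨le_rfl, hsπ⟩
    have hev' : ∀ᶠ x in nhdsWithin s (Set.Ioc s Real.pi),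
        (x - s) * (∫ t in Set.Ioc s x, h t) < 1 :=
      hev.filter_mono (nhdsWithin_mono s Set.Ioc_subset_Icc_self)
    obtain ⟨dd, hdd1, hdd2⟩ := (hev'.and eventually_mem_nhdsWithin).exists
    have hsmall : (dd - s) * ∫ t in s..dd, h t < 1 := by
      rwa [intervalIntegral.integral_of_le hdd2.1.le]
    have hloc := local_vanish_right hu hh hposh hb hsIcc.1 hdd2.1.le hdd2.2 hus hus' hsmall
    have hdB : dd ∈ B := by
      refine ⟨⟨hcs.trans hdd2.1.le, hdd2.2⟩, fun y hy => ?_⟩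
      by_cases hys : y ≤ s
      · rcases eq_or_lt_of_le hys with h' | h'
        · rw [h']; exact hus
        · exact hzero y ⟨hy.1, h'⟩
      · exact hloc y ⟨le_of_not_ge hys, hy.2⟩
    exact absurd (le_csSup hbdd hdB) (not_le.2 hdd2.1)

lemma vanish_left {u u' u'' h : ℝ → ℝ} (hu : IsC2AC u u' u'')
    (hh : IntervalIntegrable h volume 0 Real.pi) (hposh : ∀ x, 0 ≤ h x)
    (hb : ∀ᵐ x ∂volume, x ∈ Set.Ioo 0 Real.pi → |u'' x| ≤ h x * |u x|)
    {c : ℝ} (hc : c ∈ Set.Icc 0 Real.pi)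
    (h0 : u c = 0) (h0' : u' c = 0) : ∀ y ∈ Set.Icc 0 c, u y = 0 := by
  set B := {x ∈ Set.Icc 0 c | ∀ y ∈ Set.Icc x c, u y = 0} with hB
  have hcB : c ∈ B := ⟨⟨hc.1, le_rfl⟩, fun y hy => by
    have : y = c := le_antisymm hy.2 hy.1
    rw [this]; exact h0⟩
  have hbdd : BddBelow B := ⟨0, fun x hx => hx.1.1⟩
  set s := sInf B with hs
  have hcs : s ≤ c := csInf_le hbdd hcB
  have hs0 : 0 ≤ s := le_csInf ⟨c, hcB⟩ (fun x hx => hx.1.1)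
  have hsIcc : s ∈ Set.Icc 0 Real.pi := ⟨hs0, hcs.trans hc.2⟩
  have hzero : ∀ y ∈ Set.Ioc s c, u y = 0 := by
    intro y hy
    obtain ⟨x, hxB, hyx⟩ := exists_lt_of_csInf_lt ⟨c, hcB⟩ hy.1
    exact hxB.2 y ⟨hyx.le, hy.2⟩
  have hus : u s = 0 := by
    rcases eq_or_lt_of_le hcs with hh' | hh'
    · rw [hh']; exact h0
    · haveI : (nhdsWithin s (Set.Ioc s c)).NeBot := by
        rw [← mem_closure_iff_nhdsWithin_neBot, closure_Ioc hh'.ne]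
        exact ⟨le_rfl, hcs⟩
      have hsub' : Set.Ioc s c ⊆ Set.Icc 0 Real.pi :=
        fun z hz => ⟨hs0.trans hz.1.le, hz.2.trans hc.2⟩
      have ht : Filter.Tendsto u (nhdsWithin s (Set.Ioc s c)) (nhds (u s)) :=
        (hu.contOn s hsIcc).mono hsub'
      have ht0 : Filter.Tendsto u (nhdsWithin s (Set.Ioc s c)) (nhds 0) := by
        apply Filter.Tendsto.congr' _ tendsto_const_nhds
        filter_upwards [eventually_mem_nhdsWithin] with z hz using (hzero z hz).symm
      exact tendsto_nhds_unique ht ht0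
  have hus' : u' s = 0 := by
    rcases eq_or_lt_of_le hcs with hh' | hh'
    · rw [hh']; exact h0'
    · haveI : (nhdsWithin s (Set.Ioc s c)).NeBot := by
        rw [← mem_closure_iff_nhdsWithin_neBot, closure_Ioc hh'.ne]
        exact ⟨le_rfl, hcs⟩
      have hsub' : Set.Ioc s c ⊆ Set.Icc 0 Real.pi \ {s} :=
        fun z hz => ⟨⟨hs0.trans hz.1.le, hz.2.trans hc.2⟩, fun hzz => (lt_irrefl s (hzz ▸ hz.1))⟩
      have hd := (hu.1 s hsIcc)
      rw [hasDerivWithinAt_iff_tendsto_slope] at hd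
      have hd' : Filter.Tendsto (slope u s) (nhdsWithin s (Set.Ioc s c)) (nhds (u' s)) :=
        hd.mono_left (nhdsWithin_mono s hsub')
      have ht0 : Filter.Tendsto (slope u s) (nhdsWithin s (Set.Ioc s c)) (nhds 0) := by
        apply Filter.Tendsto.congr' _ tendsto_const_nhds
        filter_upwards [eventually_mem_nhdsWithin] with z hz
        rw [slope_def_field, hzero z hz, hus]
        simp
      exact tendsto_nhds_unique hd' ht0
  rcases eq_or_lt_of_le hs0 with hfin | hlt
  · intro y hy
    rcases eq_or_lt_of_le hy.1 with h' | h'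
    · rw [show y = s from (h'.symm.trans hfin)]; exact hus
    · exact hzero y ⟨hfin ▸ h', hy.2⟩
  · exfalso
    have hhint : IntegrableOn h (Set.Icc 0 s) volume := by
      rw [integrableOn_Icc_iff_integrableOn_Ioc]
      exact hh.1.mono_set (Set.Ioc_subset_Ioc le_rfl hsIcc.2)
    have hG : ContinuousOn (fun x => (s - x) * ∫ t in x..s, h t) (Set.Icc 0 s) := by
      apply (continuousOn_const.sub continuousOn_id).mul
      have := intervalIntegral.continuousOn_primitive_interval_left
        (f := h) (a := 0) (b := s) (μ := volume) (by rwa [Set.uIcc_of_le hs0])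
      rwa [Set.uIcc_of_le hs0] at this
    have hGs : ContinuousWithinAt (fun x => (s - x) * ∫ t in x..s, h t)
        (Set.Icc 0 s) s := hG s ⟨hs0, le_rfl⟩
    have hev : ∀ᶠ x in nhdsWithin s (Set.Icc 0 s),
        (s - x) * (∫ t in x..s, h t) < 1 := by
      have h1 : Filter.Tendsto (fun x => (s - x) * ∫ t in x..s, h t)
          (nhdsWithin s (Set.Icc 0 s))
          (nhds ((s - s) * ∫ t in s..s, h t)) := hGs
      rw [show (s - s) * ∫ t in s..s, h t = 0 by simp] at h1
      exact h1 (Iio_mem_nhds one_pos)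
    haveI : (nhdsWithin s (Set.Ico 0 s)).NeBot := by
      rw [← mem_closure_iff_nhdsWithin_neBot, closure_Ico hlt.ne]
      exact ⟨hs0, le_rfl⟩
    have hev' : ∀ᶠ x in nhdsWithin s (Set.Ico 0 s),
        (s - x) * (∫ t in x..s, h t) < 1 :=
      hev.filter_mono (nhdsWithin_mono s Set.Ico_subset_Icc_self)
    obtain ⟨dd, hdd1, hdd2⟩ := (hev'.and eventually_mem_nhdsWithin).exists
    have hsmall : (s - dd) * ∫ t in dd..s, h t < 1 := hdd1
    have hloc := local_vanish_left hu hh hposh hb hdd2.1 hdd2.2.le hsIcc.2 hus hus' hsmall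
    have hdB : dd ∈ B := by
      refine ⟨⟨hdd2.1, hdd2.2.le.trans hcs⟩, fun y hy => ?_⟩
      by_cases hys : s ≤ y
      · rcases eq_or_lt_of_le hys with h' | h'
        · rw [← h']; exact hus
        · exact hzero y ⟨h', hy.2⟩
      · exact hloc y ⟨hy.1, le_of_not_ge hys⟩
    exact absurd (csInf_le hbdd hdB) (not_le.2 hdd2.2)

lemma muI_finite : IsFiniteMeasure μI := by
  constructor
  rw [μI, Measure.restrict_apply_univ, Real.volume_Ioo]
  exact ENNReal.ofReal_lt_top

lemma infinite_case {q₀ : ℝ → ℝ} {lam : ℝ} {u u' u'' : ℝ → ℝ}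
    (hq₀ : MemL2 q₀) (hu : IsC2AC u u' u'')
    (equ : ∀ᵐ x ∂μI, -u'' x + q₀ x * u x = lam * u x + (-1) * u x ^ 3)
    (hnz : Nonzero u) (hinf : (ZeroSet u).Infinite) : False := by
  haveI := muI_finite
  -- the dominating function
  set h : ℝ → ℝ := fun x => |q₀ x| + |lam| + u x ^ 2 with hh_def
  have hposh : ∀ x, 0 ≤ h x := by
    intro x; rw [hh_def]; positivity
  have hq₀i : IntegrableOn q₀ (Set.Ioo 0 Real.pi) volume := by
    have h1 : MemLp q₀ 1 μI := hq₀.mono_exponent (by norm_num)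
    exact (memLp_one_iff_integrable.mp h1)
  have hui : IntegrableOn (fun x => u x ^ 2) (Set.Ioo 0 Real.pi) volume := by
    apply (((hu.contOn.pow 2).integrableOn_Icc).mono_set Set.Ioo_subset_Icc_self)
  have hh_int : IntervalIntegrable h volume 0 Real.pi := by
    rw [intervalIntegrable_iff_integrableOn_Ioc_of_le Real.pi_nonneg]
    have : IntegrableOn h (Set.Ioo 0 Real.pi) volume :=
      (hq₀i.abs.add (integrableOn_const (C := |lam|) (by rw [Real.volume_Ioo]; exact ENNReal.ofReal_ne_top))).add hui
    exact this.congr_set_ae (MeasureTheory.Ioo_ae_eq_Ioc (α := ℝ) (a := 0) (b := Real.pi)).symm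
  have hb : ∀ᵐ x ∂volume, x ∈ Set.Ioo 0 Real.pi → |u'' x| ≤ h x * |u x| := by
    have := (ae_restrict_iff' measurableSet_Ioo).mp equ
    filter_upwards [this] with x hx hmem
    have e := hx hmem
    have : u'' x = (q₀ x - lam) * u x + u x ^ 2 * u x := by nlinarith [e]
    rw [this, hh_def]
    calc |(q₀ x - lam) * u x + u x ^ 2 * u x|
        ≤ |(q₀ x - lam) * u x| + |u x ^ 2 * u x| := abs_add_le _ _
      _ = |q₀ x - lam| * |u x| + u x ^ 2 * |u x| := by
          rw [abs_mul, abs_mul, abs_of_nonneg (sq_nonneg (u x))]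
      _ ≤ (|q₀ x| + |lam|) * |u x| + u x ^ 2 * |u x| := by
          have : |q₀ x - lam| ≤ |q₀ x| + |lam| := abs_sub _ _
          nlinarith [abs_nonneg (u x)]
      _ = (|q₀ x| + |lam| + u x ^ 2) * |u x| := by ring
  -- accumulation point
  obtain ⟨c, hcK, hacc⟩ := hinf.exists_accPt_of_subset_isCompact isCompact_Icc
    (fun z hz => Set.Ioo_subset_Icc_self hz.1)
  have hnb : (nhdsWithin c (ZeroSet u \ {c})).NeBot := by
    have heq : ZeroSet u \ {c} = {c}ᶜ ∩ ZeroSet u := by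
      rw [Set.diff_eq, Set.inter_comm]
    rw [heq, nhdsWithin_inter']
    exact hacc
  obtain ⟨huc, huc'⟩ := acc_zero_deriv hu hcK hnb (fun z hz => hz.1.2)
  obtain ⟨x₀, hx₀, hx₀ne⟩ := hnz
  rcases le_total x₀ c with hle | hle
  · exact hx₀ne (vanish_left hu hh_int hposh hb hcK huc huc' x₀ ⟨hx₀.1, hle⟩)
  · exact hx₀ne (vanish_right hu hh_int hposh hb hcK huc huc' x₀ ⟨hle, hx₀.2⟩)

lemma count {q₀ : ℝ → ℝ} {α lam mu : ℝ} (hlam : lam ≤ mu)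
    {u u' u'' v v' v'' : ℝ → ℝ}
    (hu : IsC2AC u u' u'') (hv : IsC2AC v v' v'')
    (equ : ∀ᵐ x ∂μI, -u'' x + q₀ x * u x = lam * u x + (-1) * u x ^ 3)
    (eqv : ∀ᵐ x ∂μI, -v'' x + q₀ x * v x = mu * v x)
    (bcu : BC α u u') (bcv : BC α v v')
    (hZufin : (ZeroSet u).Finite) (hZvfin : (ZeroSet v).Finite) :
    ∀ n : ℕ, ∀ c : ℝ, 0 ≤ c → c < Real.pi → (c = 0 ∨ u c = 0) →
      n ≤ (ZeroSet u ∩ Set.Ioi c).ncard → n + 1 ≤ (ZeroSet v ∩ Set.Ioi c).ncard := by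
  intro n
  induction n with
  | zero =>
    intro c hc0 hcπ hcu _
    by_cases hT : (ZeroSet u ∩ Set.Ioi c).Nonempty
    · obtain ⟨b, hbT, hbmin⟩ := Set.exists_min_image _ id (hZufin.inter_of_left _) hT
      have hbZ : b ∈ ZeroSet u := hbT.1
      have hcb : c < b := hbT.2
      have hbπ : b ≤ Real.pi := hbZ.1.2.le
      have hne : ∀ x ∈ Set.Ioo c b, u x ≠ 0 := by
        intro x hx hx0
        have hxZ : x ∈ ZeroSet u ∩ Set.Ioi c :=
          ⟨⟨⟨lt_of_le_of_lt hc0 hx.1, lt_of_lt_of_le hx.2 hbπ⟩, hx0⟩, hx.1⟩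
        exact absurd (hbmin x hxZ) (not_le.2 hx.2)
      obtain ⟨y, hy, hvy⟩ := lemA hlam hu hv equ eqv bcu bcv hc0 hcb hbπ hcu (Or.inr hbZ.2) hne
      have hyy : y ∈ ZeroSet v ∩ Set.Ioi c :=
        ⟨⟨⟨lt_of_le_of_lt hc0 hy.1, lt_of_lt_of_le hy.2 hbπ⟩, hvy⟩, hy.1⟩
      have := (Set.ncard_pos (hZvfin.inter_of_left _)).mpr ⟨y, hyy⟩
      omega
    · have hne : ∀ x ∈ Set.Ioo c Real.pi, u x ≠ 0 := fun x hx hx0 =>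
        hT ⟨x, ⟨⟨lt_of_le_of_lt hc0 hx.1, hx.2⟩, hx0⟩, hx.1⟩
      obtain ⟨y, hy, hvy⟩ := lemA hlam hu hv equ eqv bcu bcv hc0 hcπ le_rfl hcu (Or.inl rfl) hne
      have hyy : y ∈ ZeroSet v ∩ Set.Ioi c :=
        ⟨⟨⟨lt_of_le_of_lt hc0 hy.1, hy.2⟩, hvy⟩, hy.1⟩
      have := (Set.ncard_pos (hZvfin.inter_of_left _)).mpr ⟨y, hyy⟩
      omega
  | succ n ih =>
    intro c hc0 hcπ hcu hcard
    have hTfin := hZufin.inter_of_left (Set.Ioi c)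
    have hT : (ZeroSet u ∩ Set.Ioi c).Nonempty :=
      Set.nonempty_of_ncard_ne_zero (by omega)
    obtain ⟨z, hzT, hzmin⟩ := Set.exists_min_image _ id hTfin hT
    have hzZ : z ∈ ZeroSet u := hzT.1
    have hcz : c < z := hzT.2
    have hzπ : z < Real.pi := hzZ.1.2
    have hne : ∀ x ∈ Set.Ioo c z, u x ≠ 0 := by
      intro x hx hx0
      have hxZ : x ∈ ZeroSet u ∩ Set.Ioi c :=
        ⟨⟨⟨lt_of_le_of_lt hc0 hx.1, hx.2.trans hzπ⟩, hx0⟩, hx.1⟩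
      exact absurd (hzmin x hxZ) (not_le.2 hx.2)
    obtain ⟨y, hy, hvy⟩ := lemA hlam hu hv equ eqv bcu bcv hc0 hcz hzπ.le hcu (Or.inr hzZ.2) hne
    have hins : ZeroSet u ∩ Set.Ioi c = insert z (ZeroSet u ∩ Set.Ioi z) := by
      ext x
      simp only [Set.mem_insert_iff, Set.mem_inter_iff, Set.mem_Ioi]
      constructor
      · rintro ⟨hxZ, hxc⟩
        rcases eq_or_lt_of_le (hzmin x ⟨hxZ, hxc⟩) with h | h
        · exact Or.inl h.symm
        · exact Or.inr ⟨hxZ, h⟩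
      · rintro (rfl | ⟨hxZ, hxz⟩)
        · exact ⟨hzZ, hcz⟩
        · exact ⟨hxZ, hcz.trans hxz⟩
    have hcard' : n ≤ (ZeroSet u ∩ Set.Ioi z).ncard := by
      have hzni : z ∉ ZeroSet u ∩ Set.Ioi z := fun h => lt_irrefl z h.2
      rw [hins, Set.ncard_insert_of_notMem hzni (hZufin.inter_of_left _)] at hcard
      omega
    have ihv := ih z (hc0.trans hcz.le) hzπ (Or.inr hzZ.2) hcard'
    have hyZ : y ∈ ZeroSet v := ⟨⟨lt_of_le_of_lt hc0 hy.1, hy.2.trans hzπ⟩, hvy⟩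
    have hsub2 : insert y (ZeroSet v ∩ Set.Ioi z) ⊆ ZeroSet v ∩ Set.Ioi c := by
      rintro x (rfl | ⟨hxZ, hxz⟩)
      · exact ⟨hyZ, hy.1⟩
      · exact ⟨hxZ, hcz.trans hxz⟩
    have hyni : y ∉ ZeroSet v ∩ Set.Ioi z := fun h => lt_asymm hy.2 h.2
    calc n + 1 + 1 ≤ (ZeroSet v ∩ Set.Ioi z).ncard + 1 := by omega
      _ = (insert y (ZeroSet v ∩ Set.Ioi z)).ncard :=
          (Set.ncard_insert_of_notMem hyni (hZvfin.inter_of_left _)).symm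
      _ ≤ (ZeroSet v ∩ Set.Ioi c).ncard :=
          Set.ncard_le_ncard hsub2 (hZvfin.inter_of_left _)

end Helpers

/-- If μ is the k-th eigenvalue of L[q₀], then for every lam ≤ μ the problem (NP_{-1})
has no nonzero solution with at least k-1 zeros in (0,π). -/
theorem stmt4 (q₀ : ℝ → ℝ) (hq₀ : MemL2 q₀) (α : ℝ) (k : ℕ) (hk : 1 ≤ k)
    (μ : ℝ) (hμ : HasEigenK q₀ α μ k) :
    ∀ lam : ℝ, lam ≤ μ →
      ¬ ∃ u u' u'', IsNPSol q₀ α lam (-1) u u' u'' ∧ Nonzero u ∧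
        (¬ (ZeroSet u).Finite ∨ k - 1 ≤ (ZeroSet u).ncard) := by
  intro lam hlam
  rintro ⟨u, u', u'', ⟨huC2, hequ, hbcu⟩, hnz, hcase⟩
  obtain ⟨v, v', v'', ⟨hvC2, _, heqv, _, hbcv⟩, hZvfin, hZvcard⟩ := hμ
  by_cases hfin : (ZeroSet u).Finite
  · have hge : k - 1 ≤ (ZeroSet u).ncard := by
      rcases hcase with h | h
      · exact absurd hfin h
      · exact h
    have he1 : ZeroSet u ∩ Set.Ioi 0 = ZeroSet u :=
      Set.inter_eq_self_of_subset_left (fun x hx => hx.1.1)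
    have he2 : ZeroSet v ∩ Set.Ioi 0 = ZeroSet v :=
      Set.inter_eq_self_of_subset_left (fun x hx => hx.1.1)
    have hcount := count hlam huC2 hvC2 hequ heqv hbcu hbcv hfin hZvfin (k-1) 0
      le_rfl Real.pi_pos (Or.inl rfl) (by rw [he1]; exact hge)
    rw [he2, hZvcard] at hcount
    omega
  · exact infinite_case hq₀ huC2 hequ hnz hfin
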